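/- Let m ≥ 2, r ≥ 1, and s ≥ 2r(m-1)+1 be integers, and set I_1 = [1, r(m-1)+1], I_2 = [r(m-1)+2, 2r(m-1)], I_3 = [2r(m-1)+1, s]. If Δ: [1,s] → [1,r] is a coloring and there exists a monochromatic m-set Y ⊆ I_2 ∪ I_3 with y_m ∈ I_3, then there exist monochromatic m-sets X, Y' ⊆ [1,s] with X ≺ Y' and 2(x_m - x_1) ≤ y'_m - x_1 (i.e., Δ is not an L(r)-coloring). -/

import Mathlib

/-- `x` is a monochromatic m-set (indexed 1..m) inside `S` under coloring `Δ`. -/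
def IsMonoMSet (m : ℕ) (Δ : ℕ → ℕ) (S : Finset ℕ) (x : ℕ → ℕ) : Prop :=
  (∀ i j, 1 ≤ i → i < j → j ≤ m → x i < x j) ∧
  (∀ i, 1 ≤ i → i ≤ m → x i ∈ S) ∧
  (∀ i, 1 ≤ i → i ≤ m → Δ (x i) = Δ (x 1))

/-- There exist monochromatic m-sets X ≺ Y in `S` with 2(x_m - x_1) ≤ y_m - x_1. -/
def HasGoodPair (m : ℕ) (Δ : ℕ → ℕ) (S : Finset ℕ) : Prop :=
  ∃ x y : ℕ → ℕ, IsMonoMSet m Δ S x ∧ IsMonoMSet m Δ S y ∧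
    x m < y 1 ∧ 2 * (x m - x 1) ≤ y m - x 1

/-- `g m r` : least N such that every r-coloring of [1,N] has a good pair. -/
noncomputable def g (m r : ℕ) : ℕ :=
  sInf {N | ∀ Δ : ℕ → ℕ, (∀ z ∈ Finset.Icc 1 N, Δ z ∈ Finset.Icc 1 r) →
    HasGoodPair m Δ (Finset.Icc 1 N)}

theorem stmt3 (m r s : ℕ) (hm : 2 ≤ m) (hr : 1 ≤ r)
    (hs : 2 * r * (m - 1) + 1 ≤ s) (Δ : ℕ → ℕ)
    (hΔ : ∀ z ∈ Finset.Icc 1 s, Δ z ∈ Finset.Icc 1 r)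
    (Y : ℕ → ℕ)
    (hY : IsMonoMSet m Δ (Finset.Icc (r * (m - 1) + 2) s) Y)
    (hYm : Y m ∈ Finset.Icc (2 * r * (m - 1) + 1) s) :
    HasGoodPair m Δ (Finset.Icc 1 s) := by
  set k := r * (m - 1) with hk
  have hkpos : 1 ≤ k := by
    have : 1 ≤ m - 1 := by omega
    calc 1 = 1 * 1 := by ring
    _ ≤ r * (m - 1) := Nat.mul_le_mul hr this
  have h2k : 2 * r * (m - 1) = 2 * k := by rw [hk]; ring
  have hks : k + 1 ≤ s := by omega
  -- pigeonhole on I₁ = Icc 1 (k+1)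
  have hmaps : ∀ z ∈ Finset.Icc 1 (k + 1), Δ z ∈ Finset.Icc 1 r := by
    intro z hz
    simp only [Finset.mem_Icc] at hz ⊢
    have := hΔ z (by simp only [Finset.mem_Icc]; omega)
    simpa using this
  have hcard : (Finset.Icc 1 r).card * (m - 1) < (Finset.Icc 1 (k + 1)).card := by
    simp [Nat.card_Icc]
    exact hk.symm.le
  obtain ⟨c, -, hc⟩ :=
    Finset.exists_lt_card_fiber_of_mul_lt_card_of_maps_to hmaps hcard
  have hmle : m ≤ ((Finset.Icc 1 (k + 1)).filter (fun z => Δ z = c)).card := by omega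
  obtain ⟨F, hFsub, hFcard⟩ :=
    Finset.exists_subset_card_eq hmle
  have e := F.orderIsoOfFin hFcard
  set x : ℕ → ℕ := fun i => if h : i - 1 < m then (F.orderIsoOfFin hFcard ⟨i - 1, h⟩ : ℕ) else 0
    with hx
  have hxmem : ∀ i, 1 ≤ i → i ≤ m → x i ∈ F := by
    intro i h1 h2
    have h : i - 1 < m := by omega
    simp only [hx, dif_pos h]
    exact (F.orderIsoOfFin hFcard ⟨i - 1, h⟩).2
  have hxI : ∀ i, 1 ≤ i → i ≤ m → x i ∈ Finset.Icc 1 (k + 1) ∧ Δ (x i) = c := by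
    intro i h1 h2
    have := hFsub (hxmem i h1 h2)
    simpa using Finset.mem_filter.mp this
  have hxmono : ∀ i j, 1 ≤ i → i < j → j ≤ m → x i < x j := by
    intro i j h1 h2 h3
    have hi : i - 1 < m := by omega
    have hj : j - 1 < m := by omega
    simp only [hx, dif_pos hi, dif_pos hj]
    have : (⟨i - 1, hi⟩ : Fin m) < ⟨j - 1, hj⟩ := by
      simp [Fin.lt_def]; omega
    exact (F.orderIsoOfFin hFcard).strictMono this
  obtain ⟨hYmono, hYmem, hYcol⟩ := hY
  refine ⟨x, Y, ⟨hxmono, ?_, ?_⟩, ⟨hYmono, ?_, hYcol⟩, ?_, ?_⟩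
  · intro i h1 h2
    have := (hxI i h1 h2).1
    simp only [Finset.mem_Icc] at this ⊢
    omega
  · intro i h1 h2
    rw [(hxI i h1 h2).2, (hxI 1 le_rfl (by omega)).2]
  · intro i h1 h2
    have := hYmem i h1 h2
    simp only [Finset.mem_Icc] at this ⊢
    omega
  · have hxm := (hxI m (by omega) le_rfl).1
    have hy1 := hYmem 1 le_rfl (by omega)
    simp only [Finset.mem_Icc] at hxm hy1
    omega
  · have hxm := (hxI m (by omega) le_rfl).1
    have hx1 := (hxI 1 le_rfl (by omega)).1
    have h1m : x 1 ≤ x m := le_of_lt (hxmono 1 m le_rfl (by omega) le_rfl)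
    simp only [Finset.mem_Icc] at hxm hx1 hYm
    omega
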